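/- Let α, β > 0 and (v, θ, ω) ∈ ℝ³ with H₁(v,θ,ω)·H₂(v,θ,ω) < 0. Set t₁ = −H₁(v,θ,ω)/(2αω), t₂ = |ω|/α, t₃ = |v|/β − t₁, and let s₃, s₄ ∈ {−1,1} satisfy s₃·v = −|v| and s₄·ω = −|ω|. Then t₁ > 0, t₃ > 0, and the β-α-β final state from (v, θ, ω) with durations t₁, t₂, t₃ and signs s₃, s₄ equals (0, 0, 0). -/

import Mathlib

noncomputable def H1 (α v θ ω : ℝ) : ℝ := 2 * α * θ + ω * |ω|

noncomputable def H2 (α β v θ ω : ℝ) : ℝ := ω * |ω| / (2 * α) + θ + ω * |v| / β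

/-- The β-α-β final state `(v_f, θ_f, ω_f)`: linear acceleration `s₃ * β` for time `t₁`,
angular acceleration `s₄ * α` for time `t₂`, linear acceleration `s₃ * β` for time `t₃`. -/
noncomputable def babFinal (α β v θ ω t₁ t₂ t₃ s₃ s₄ : ℝ) : ℝ × ℝ × ℝ :=
  (v + s₃ * β * (t₁ + t₃),
   θ + ω * t₁ + ω * t₂ + s₄ * α * t₂ ^ 2 / 2 + (ω + s₄ * α * t₂) * t₃,
   ω + s₄ * α * t₂)

theorem stmt6 (α β v θ ω : ℝ) (hα : 0 < α) (hβ : 0 < β)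
    (h : H1 α v θ ω * H2 α β v θ ω < 0)
    (t₁ t₂ t₃ : ℝ)
    (ht₁ : t₁ = -(H1 α v θ ω) / (2 * α * ω))
    (ht₂ : t₂ = |ω| / α)
    (ht₃ : t₃ = |v| / β - t₁)
    (s₃ s₄ : ℝ) (hs₃ : s₃ = -1 ∨ s₃ = 1) (hs₄ : s₄ = -1 ∨ s₄ = 1)
    (hs₃v : s₃ * v = -|v|) (hs₄ω : s₄ * ω = -|ω|) :
    0 < t₁ ∧ 0 < t₃ ∧ babFinal α β v θ ω t₁ t₂ t₃ s₃ s₄ = (0, 0, 0) := by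
  simp only [H1, H2] at h ht₁
  have hω : ω ≠ 0 := by
    intro h0
    rw [h0] at h
    simp only [abs_zero, mul_zero, zero_mul, add_zero, zero_add, zero_div] at h
    nlinarith [mul_nonneg hα.le (sq_nonneg θ)]
  have hω2 : (0:ℝ) < ω ^ 2 := by positivity
  have hs₄sq : s₄ * s₄ = 1 := by rcases hs₄ with h' | h' <;> subst h' <;> norm_num
  have hs₃sq : s₃ * s₃ = 1 := by rcases hs₃ with h' | h' <;> subst h' <;> norm_num
  have h4 : s₄ * |ω| = -ω := by linear_combination s₄ * hs₄ω - ω * hs₄sq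
  have h3 : s₃ * |v| = -v := by linear_combination s₃ * hs₃v - v * hs₃sq
  have habsv : (0:ℝ) ≤ |v| := abs_nonneg v
  -- cleared version of the hypothesis h
  have key : (2*α*β) * ((2*α*θ + ω*|ω|) * (ω*|ω|/(2*α) + θ + ω*|v|/β))
      = (2*α*θ + ω*|ω|) * (β*(2*α*θ + ω*|ω|) + 2*α*(ω*|v|)) := by
    field_simp
    ring_nf
  have hc : (2*α*θ + ω*|ω|) * (β*(2*α*θ + ω*|ω|) + 2*α*(ω*|v|)) < 0 := by
    rw [← key]
    exact mul_neg_of_pos_of_neg (by positivity) h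
  have hAω : (2*α*θ + ω*|ω|) * ω < 0 := by
    nlinarith [hc, mul_nonneg (abs_nonneg v) hα.le,
      mul_nonneg hβ.le (sq_nonneg (2*α*θ + ω*|ω|))]
  have hBω : 0 < (β*(2*α*θ + ω*|ω|) + 2*α*(ω*|v|)) * ω := by
    nlinarith [hc, mul_nonneg (abs_nonneg v) hα.le,
      sq_nonneg (β*(2*α*θ + ω*|ω|) + 2*α*(ω*|v|))]
  have hd : (2*α*ω) ≠ 0 := mul_ne_zero (by positivity) hω
  have ht₁' : t₁ = -((2*α*θ + ω*|ω|) * ω) / (2*α*ω^2) := by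
    rw [ht₁, div_eq_div_iff hd (by positivity)]
    ring
  have ht₁pos : 0 < t₁ := by
    rw [ht₁']
    exact div_pos (by linarith) (by positivity)
  have ht₃' : t₃ = (β*(2*α*θ + ω*|ω|) + 2*α*(ω*|v|)) * ω / (2*α*β*ω^2) := by
    rw [ht₃, ht₁]
    field_simp
    ring
  have ht₃pos : 0 < t₃ := by
    rw [ht₃']
    exact div_pos hBω (by positivity)
  refine ⟨ht₁pos, ht₃pos, ?_⟩
  have hsum : t₁ + t₃ = |v| / β := by rw [ht₃]; ring
  have F1 : ω * t₁ * (2*α) = -(2*α*θ + ω*|ω|) := by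
    rw [ht₁]; field_simp
  have F2 : t₂ * α = |ω| := by rw [ht₂]; field_simp
  have F3 : ω + s₄ * α * t₂ = 0 := by
    rw [ht₂]; field_simp; linear_combination h4
  have hvf : v + s₃ * β * (t₁ + t₃) = 0 := by
    rw [hsum]; field_simp; linear_combination h3
  have hmain : (θ + ω * t₁ + ω * t₂ + s₄ * α * t₂ ^ 2 / 2 + (ω + s₄ * α * t₂) * t₃)
      * (2*α) = 0 := by
    linear_combination F1 + ω * F2 + (α*t₂ + 2*α*t₃) * F3
  have hθf : θ + ω * t₁ + ω * t₂ + s₄ * α * t₂ ^ 2 / 2 + (ω + s₄ * α * t₂) * t₃ = 0 := by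
    rcases mul_eq_zero.mp hmain with h' | h'
    · exact h'
    · linarith
  unfold babFinal
  rw [hvf, hθf, F3]
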